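/- Let G be a finite simple graph on vertex set V whose adjacency matrix has minimum eigenvalue λ < 0, and let S be an independent set of G such that every vertex i ∉ S has at least −λ neighbors in S. Then for every positive integer k, the k-th strong power G^k — the simple graph on the vertex set of functions Fin k → V in which distinct u and v are adjacent if and only if for every coordinate i either u(i) = v(i) or {u(i), v(i)} ∈ E(G) — has independence number α(G^k) = |S|^k. (This realizes the paper's conclusion that the Shannon capacity Θ(G) = sup_k α(G^k)^{1/k} equals |S|.) -/

import Mathlib

open Pointwise

/-- The `k`-th strong power `G^k` of a simple graph `G`: vertices are functions
`Fin k → V`, and distinct `u, v` are adjacent iff for every coordinate `i` either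
`u i = v i` or `u i` is adjacent to `v i` in `G`. -/
def SimpleGraph.strongPower {V : Type*} (G : SimpleGraph V) (k : ℕ) :
    SimpleGraph (Fin k → V) where
  Adj u v := u ≠ v ∧ ∀ i, u i = v i ∨ G.Adj (u i) (v i)
  symm := ⟨fun u v ⟨h1, h2⟩ => ⟨h1.symm, fun i => (h2 i).imp Eq.symm (fun h => G.adj_symm h)⟩⟩
  loopless := ⟨fun u ⟨h1, _⟩ => h1 rfl⟩

/-- **A spectral condition determining the Shannon capacity** (Theorem 4.1). Let `G` be a
graph with minimum adjacency eigenvalue `lam < 0`, and let `S` be an independent set such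
that every vertex `i ∉ S` has at least `−λ` neighbours in `S`. Then for every `k > 0` the
`k`-th strong power of `G` has independence number `|S|^k`; consequently the Shannon
capacity `Θ(G) = sup_k α(G^k)^{1/k}` equals `|S|`. -/
theorem independence_number_strongPower_eq_of_spectral_condition
    {V : Type*} [Fintype V] [Nonempty V] [DecidableEq V]
    (G : SimpleGraph V) [DecidableRel G.Adj]
    (lam : ℝ) (hlam : IsLeast (spectrum ℝ (G.adjMatrix ℝ)) lam) (hneg : lam < 0)
    (S : Finset V)
    (hSindep : ∀ u ∈ S, ∀ v ∈ S, ¬ G.Adj u v)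
    (hcond : ∀ i ∉ S, -lam ≤ ((S.filter fun j => G.Adj i j).card : ℝ)) :
    ∀ k : ℕ, 0 < k → ∀ αk : ℕ,
      IsGreatest {c : ℕ | ∃ T : Finset (Fin k → V),
        (∀ u ∈ T, ∀ v ∈ T, ¬ (G.strongPower k).Adj u v) ∧ T.card = c} αk →
      αk = S.card ^ k := by
  intro k _hk αk hαk
  classical
  set A := G.adjMatrix ℝ with hA
  have hc : (0:ℝ) < (-lam)⁻¹ := inv_pos.mpr (by linarith)
  -- Hermitian facts
  have hAH : A.IsHermitian := by
    rw [Matrix.IsHermitian]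
    ext a b
    simp [hA, Matrix.conjTranspose_apply, G.adj_comm]
  have hPH : (A - lam • 1).IsHermitian := by
    apply Matrix.IsHermitian.sub hAH
    rw [Matrix.IsHermitian]
    ext a b
    simp [Matrix.conjTranspose_apply, Matrix.one_apply, eq_comm]
  -- A - lam • 1 is positive semidefinite
  have hP : (A - lam • 1).PosSemidef := by
    refine hPH.posSemidef_iff_eigenvalues_nonneg.mpr fun i => ?_
    show (0:ℝ) ≤ _
    have hmem : hPH.eigenvalues i ∈ spectrum ℝ (A - lam • 1) :=
      hPH.eigenvalues_mem_spectrum_real i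
    obtain ⟨s, hs, hsub⟩ : ∃ s ∈ spectrum ℝ A, s - lam = hPH.eigenvalues i := by
      have h1 : spectrum ℝ (A - lam • 1) = spectrum ℝ A - ({lam} : Set ℝ) := by
        rw [spectrum.sub_singleton_eq, Algebra.algebraMap_eq_smul_one]
      rw [h1] at hmem
      obtain ⟨s, hs, t, ht, hst⟩ := Set.mem_sub.mp hmem
      rw [Set.mem_singleton_iff] at ht
      exact ⟨s, hs, ht ▸ hst⟩
    have := hlam.2 hs
    rw [← hsub]
    linarith
  -- the normalized matrix B and its Gram factorization
  set B : Matrix V V ℝ := (-lam)⁻¹ • (A - lam • 1) with hBdef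
  obtain ⟨M, hM⟩ : ∃ M : Matrix V V ℝ, A - lam • 1 = M.conjTranspose * M := by
    open scoped MatrixOrder in exact CStarAlgebra.nonneg_iff_eq_star_mul_self.mp hP.nonneg
  set N : Matrix V V ℝ := Real.sqrt ((-lam)⁻¹) • M with hNdef
  have hBN : B = N.conjTranspose * N := by
    rw [hNdef, Matrix.conjTranspose_smul, Matrix.smul_mul, Matrix.mul_smul, smul_smul]
    rw [star_trivial, Real.mul_self_sqrt hc.le, ← hM, hBdef]
  have hBent : ∀ a b, B a b = ∑ w, N w a * N w b := by
    intro a b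
    rw [hBN, Matrix.mul_apply]
    simp [Matrix.conjTranspose_apply]
  -- entrywise values of B
  have hBval : ∀ a b, B a b =
      (-lam)⁻¹ * ((if G.Adj a b then 1 else 0) - lam * (if a = b then 1 else 0)) := by
    intro a b
    simp [hBdef, Matrix.sub_apply, Matrix.smul_apply, Matrix.one_apply, hA]
  have hBdiag : ∀ a, B a a = 1 := by
    intro a
    rw [hBval, if_neg (G.irrefl), if_pos rfl,
      show ((0:ℝ) - lam * 1) = -lam by ring, inv_mul_cancel₀ (by linarith)]
  have hB0 : ∀ a b, ¬ G.Adj a b → a ≠ b → B a b = 0 := by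
    intro a b h1 h2
    rw [hBval, if_neg h1, if_neg h2]
    ring
  have hBsymm : ∀ a b, B a b = B b a := by
    intro a b
    rw [hBval, hBval]
    have h1 : G.Adj a b ↔ G.Adj b a := G.adj_comm a b
    have h2 : (a = b) ↔ (b = a) := eq_comm
    simp only [h1, h2]
  -- row sums over S are at least 1
  have hrow : ∀ a, (1:ℝ) ≤ ∑ b ∈ S, B a b := by
    intro a
    by_cases ha : a ∈ S
    · have : ∑ b ∈ S, B a b = 1 := by
        rw [Finset.sum_eq_single a]
        · exact hBdiag a
        · exact fun b hb hba => hB0 a b (hSindep a ha b hb) (Ne.symm hba)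
        · exact fun h => absurd ha h
      rw [this]
    · have hstep : ∀ b ∈ S, B a b = (-lam)⁻¹ * (if G.Adj a b then 1 else 0) := by
        intro b hb
        have hab : ¬ a = b := by rintro rfl; exact ha hb
        rw [hBval, if_neg hab]
        ring
      rw [Finset.sum_congr rfl hstep, ← Finset.mul_sum, Finset.sum_boole]
      calc (1:ℝ) = (-lam)⁻¹ * (-lam) := (inv_mul_cancel₀ (by linarith)).symm
        _ ≤ _ := by
            apply mul_le_mul_of_nonneg_left _ hc.le
            exact hcond a ha
  -- independent sets give diagonal double sums
  have hdiagsum : ∀ T : Finset (Fin k → V),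
      (∀ u ∈ T, ∀ v ∈ T, u ≠ v → ∃ i, B (u i) (v i) = 0) →
      ∑ u ∈ T, ∑ v ∈ T, ∏ i, B (u i) (v i) = (T.card : ℝ) := by
    intro T hT
    have h1 : ∀ u ∈ T, ∑ v ∈ T, ∏ i, B (u i) (v i) = 1 := by
      intro u hu
      rw [Finset.sum_eq_single u]
      · simp [hBdiag]
      · intro v hv hvu
        obtain ⟨i, hi⟩ := hT u hu v hv (Ne.symm hvu)
        exact Finset.prod_eq_zero (Finset.mem_univ i) hi
      · exact fun h => absurd hu h
    rw [Finset.sum_congr rfl h1, Finset.sum_const, nsmul_eq_mul, mul_one]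
  -- the pi-power of S
  set Sk : Finset (Fin k → V) := Fintype.piFinset (fun _ => S) with hSkdef
  have hSkcard : Sk.card = S.card ^ k := Fintype.card_piFinset_const S k
  have hSkmem : ∀ {u : Fin k → V}, u ∈ Sk ↔ ∀ i, u i ∈ S := by
    intro u; exact Fintype.mem_piFinset
  -- cross sums
  have hprodSum : ∀ u : Fin k → V,
      ∑ v ∈ Sk, ∏ i, B (u i) (v i) = ∏ i, ∑ b ∈ S, B (u i) b :=
    fun u => (Finset.prod_univ_sum _ _).symm
  have hcross : ∀ u : Fin k → V, (1:ℝ) ≤ ∑ v ∈ Sk, ∏ i, B (u i) (v i) := by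
    intro u
    rw [hprodSum]
    calc (1:ℝ) = ∏ _i : Fin k, (1:ℝ) := by simp
      _ ≤ _ := Finset.prod_le_prod (fun i _ => zero_le_one) (fun i _ => hrow (u i))
  -- independence of Sk in the strong power sense
  have hSkzero : ∀ u ∈ Sk, ∀ v ∈ Sk, u ≠ v → ∃ i, B (u i) (v i) = 0 := by
    intro u hu v hv huv
    obtain ⟨i, hi⟩ := Function.ne_iff.mp huv
    exact ⟨i, hB0 _ _ (hSindep _ (hSkmem.mp hu i) _ (hSkmem.mp hv i)) hi⟩
  -- upper bound: any independent set T in G^k has |T| ≤ |S|^k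
  have hupper : ∀ T : Finset (Fin k → V),
      (∀ u ∈ T, ∀ v ∈ T, ¬ (G.strongPower k).Adj u v) → (T.card : ℝ) ≤ (S.card : ℝ) ^ k := by
    intro T hTind
    have hTzero : ∀ u ∈ T, ∀ v ∈ T, u ≠ v → ∃ i, B (u i) (v i) = 0 := by
      intro u hu v hv huv
      have h := hTind u hu v hv
      simp only [SimpleGraph.strongPower] at h
      push_neg at h
      obtain ⟨i, hi1, hi2⟩ := h huv
      exact ⟨i, hB0 _ _ hi2 hi1⟩
    set x : (Fin k → V) → ℝ :=
      fun u => (if u ∈ T then 1 else 0) - (if u ∈ Sk then 1 else 0) with hxdef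
    -- nonnegativity of the quadratic form
    have keyf : ∀ f : Fin k → V,
        ∑ u, ∑ v, x u * x v * ∏ i, (N (f i) (u i) * N (f i) (v i))
          = (∑ u, x u * ∏ i, N (f i) (u i)) ^ 2 := by
      intro f
      rw [sq, Finset.sum_mul_sum]
      refine Finset.sum_congr rfl fun u _ => Finset.sum_congr rfl fun v _ => ?_
      rw [Finset.prod_mul_distrib]
      ring
    have h1 : ∀ u v : Fin k → V,
        ∏ i, B (u i) (v i) = ∑ f : Fin k → V, ∏ i, (N (f i) (u i) * N (f i) (v i)) := by
      intro u v
      rw [show (∏ i, B (u i) (v i)) = ∏ i, ∑ w, N w (u i) * N w (v i) from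
        Finset.prod_congr rfl fun i _ => hBent _ _]
      rw [Finset.prod_univ_sum]
      rw [Fintype.piFinset_univ]
    have step : ∑ u, ∑ v, x u * x v * ∏ i, B (u i) (v i)
        = ∑ f : Fin k → V, ∑ u, ∑ v, x u * x v * ∏ i, (N (f i) (u i) * N (f i) (v i)) := by
      calc ∑ u, ∑ v, x u * x v * ∏ i, B (u i) (v i)
          = ∑ u, ∑ v, ∑ f : Fin k → V, x u * x v * ∏ i, (N (f i) (u i) * N (f i) (v i)) := by
            refine Finset.sum_congr rfl fun u _ => Finset.sum_congr rfl fun v _ => ?_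
            rw [h1, Finset.mul_sum]
        _ = ∑ u, ∑ f : Fin k → V, ∑ v, x u * x v * ∏ i, (N (f i) (u i) * N (f i) (v i)) :=
            Finset.sum_congr rfl fun u _ => Finset.sum_comm
        _ = _ := Finset.sum_comm
    have hQ : 0 ≤ ∑ u, ∑ v, x u * x v * ∏ i, B (u i) (v i) := by
      rw [step]
      refine Finset.sum_nonneg fun f _ => ?_
      rw [keyf]
      exact sq_nonneg _
    -- expansion of the quadratic form
    have ind : ∀ (W : Finset (Fin k → V)) (g : (Fin k → V) → ℝ),
        ∑ v, (if v ∈ W then (1:ℝ) else 0) * g v = ∑ v ∈ W, g v := by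
      intro W g
      simp [ite_mul]
    have hsplit : ∀ g : (Fin k → V) → ℝ,
        ∑ v, x v * g v = (∑ v ∈ T, g v) - ∑ v ∈ Sk, g v := by
      intro g
      have h2 : ∀ v, x v * g v =
          (if v ∈ T then (1:ℝ) else 0) * g v - (if v ∈ Sk then 1 else 0) * g v := by
        intro v; rw [hxdef]; ring
      rw [Finset.sum_congr rfl fun v _ => h2 v, Finset.sum_sub_distrib, ind, ind]
    have hexp : ∑ u, ∑ v, x u * x v * ∏ i, B (u i) (v i)
        = ((∑ u ∈ T, ∑ v ∈ T, ∏ i, B (u i) (v i)) - ∑ u ∈ T, ∑ v ∈ Sk, ∏ i, B (u i) (v i))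
          - ((∑ u ∈ Sk, ∑ v ∈ T, ∏ i, B (u i) (v i))
              - ∑ u ∈ Sk, ∑ v ∈ Sk, ∏ i, B (u i) (v i)) := by
      calc ∑ u, ∑ v, x u * x v * ∏ i, B (u i) (v i)
          = ∑ u, x u * ∑ v, x v * ∏ i, B (u i) (v i) := by
            refine Finset.sum_congr rfl fun u _ => ?_
            rw [Finset.mul_sum]
            exact Finset.sum_congr rfl fun v _ => by ring
        _ = ∑ u, x u * ((∑ v ∈ T, ∏ i, B (u i) (v i)) - ∑ v ∈ Sk, ∏ i, B (u i) (v i)) :=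
            Finset.sum_congr rfl fun u _ => by rw [hsplit]
        _ = (∑ u ∈ T, ((∑ v ∈ T, ∏ i, B (u i) (v i)) - ∑ v ∈ Sk, ∏ i, B (u i) (v i)))
              - ∑ u ∈ Sk, ((∑ v ∈ T, ∏ i, B (u i) (v i)) - ∑ v ∈ Sk, ∏ i, B (u i) (v i)) :=
            hsplit _
        _ = _ := by rw [Finset.sum_sub_distrib, Finset.sum_sub_distrib]
    have hQTT := hdiagsum T hTzero
    have hQSS := hdiagsum Sk hSkzero
    have hQTS : (T.card : ℝ) ≤ ∑ u ∈ T, ∑ v ∈ Sk, ∏ i, B (u i) (v i) := by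
      calc (T.card : ℝ) = ∑ _u ∈ T, (1:ℝ) := by simp
        _ ≤ _ := Finset.sum_le_sum fun u _ => hcross u
    have hQST : (T.card : ℝ) ≤ ∑ u ∈ Sk, ∑ v ∈ T, ∏ i, B (u i) (v i) := by
      rw [Finset.sum_comm]
      have h3 : ∀ v ∈ T, ∑ u ∈ Sk, ∏ i, B (u i) (v i) = ∑ u ∈ Sk, ∏ i, B (v i) (u i) :=
        fun v _ => Finset.sum_congr rfl fun u _ => Finset.prod_congr rfl fun i _ => hBsymm _ _
      rw [Finset.sum_congr rfl h3]
      calc (T.card : ℝ) = ∑ _v ∈ T, (1:ℝ) := by simp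
        _ ≤ _ := Finset.sum_le_sum fun v _ => hcross v
    have hcast : (Sk.card : ℝ) = (S.card : ℝ) ^ k := by rw [hSkcard]; push_cast; ring
    rw [hexp, hQTT, hQSS, hcast] at hQ
    linarith
  -- lower bound: Sk is an independent set of G^k
  have hSkind : ∀ u ∈ Sk, ∀ v ∈ Sk, ¬ (G.strongPower k).Adj u v := by
    intro u hu v hv hadj
    obtain ⟨hne, hall⟩ := hadj
    obtain ⟨i, hi⟩ := Function.ne_iff.mp hne
    rcases hall i with h | h
    · exact hi h
    · exact hSindep _ (hSkmem.mp hu i) _ (hSkmem.mp hv i) h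
  have hlow : S.card ^ k ≤ αk := hαk.2 ⟨Sk, hSkind, hSkcard⟩
  -- conclude
  obtain ⟨T, hTind, hTcard⟩ := hαk.1
  have hup : (αk : ℝ) ≤ (S.card : ℝ) ^ k := hTcard ▸ hupper T hTind
  have : αk ≤ S.card ^ k := by exact_mod_cast hup
  omega
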